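/- For all s ≥ r ≥ 0, I_∞(g, s) ≤ I_∞(g, r) ≤ ( I_∞(g, s)^{1/2} + ‖k‖_diag^{1/2} (s − r) )². -/

import Mathlib

open Real
open scoped RealInnerProductSpace

/-- Lemma `lApprox`: for a fixed RKHS `H` on `S` with bounded
kernel `k` (feature map `Φ`, reproducing property `h(x) = ⟪h, Φ x⟫`), a bounded
function `g`, and the approximation error
`I_∞(g, r) = inf { ‖h − g‖_∞² : h ∈ r B_H }`:  for all `s ≥ r ≥ 0`,
`I_∞(g, s) ≤ I_∞(g, r) ≤ (I_∞(g, s)^{1/2} + ‖k‖_diag^{1/2} (s − r))²`. -/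
theorem stmt_3
    {S H : Type*} [NormedAddCommGroup H] [InnerProductSpace ℝ H]
    (k : S → S → ℝ) (Φ : S → H)
    (hkrepr : ∀ x y : S, k x y = ⟪Φ x, Φ y⟫)
    (hkbdd : BddAbove (Set.range fun x => k x x))
    (g : S → ℝ) (hgbdd : ∃ M : ℝ, ∀ x, |g x| ≤ M)
    (I : ℝ → ℝ)
    (hI : ∀ r : ℝ, I r =
      sInf {c : ℝ | ∃ h : H, ‖h‖ ≤ r ∧ c = (⨆ x, |(⟪h, Φ x⟫ : ℝ) - g x|) ^ 2}) :
    ∀ r s : ℝ, 0 ≤ r → r ≤ s →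
      I s ≤ I r ∧ I r ≤ (Real.sqrt (I s) + Real.sqrt (⨆ x, k x x) * (s - r)) ^ 2 := by
  intro r s hr hrs
  obtain ⟨M, hM⟩ := hgbdd
  set K := ⨆ x, k x x with hKdef
  set A : ℝ → Set ℝ := fun t =>
    {c : ℝ | ∃ h : H, ‖h‖ ≤ t ∧ c = (⨆ x, |(⟪h, Φ x⟫ : ℝ) - g x|) ^ 2} with hA
  have hΦ : ∀ x : S, ‖Φ x‖ = Real.sqrt (k x x) := by
    intro x
    rw [hkrepr, real_inner_self_eq_norm_sq, Real.sqrt_sq (norm_nonneg _)]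
  have hΦK : ∀ x : S, ‖Φ x‖ ≤ Real.sqrt K := by
    intro x
    rw [hΦ]
    exact Real.sqrt_le_sqrt (le_ciSup hkbdd x)
  have hSnn : ∀ h : H, 0 ≤ ⨆ x, |(⟪h, Φ x⟫ : ℝ) - g x| :=
    fun h => Real.iSup_nonneg (fun x => abs_nonneg _)
  have hbddS : ∀ h : H, BddAbove (Set.range fun x => |(⟪h, Φ x⟫ : ℝ) - g x|) := by
    intro h
    refine ⟨‖h‖ * Real.sqrt K + M, ?_⟩
    rintro _ ⟨x, rfl⟩
    calc |(⟪h, Φ x⟫ : ℝ) - g x| ≤ |(⟪h, Φ x⟫ : ℝ)| + |g x| := abs_sub _ _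
      _ ≤ ‖h‖ * ‖Φ x‖ + M :=
        add_le_add (abs_real_inner_le_norm _ _) (hM x)
      _ ≤ ‖h‖ * Real.sqrt K + M := by
        gcongr
        exact hΦK x
  have hlb : ∀ t : ℝ, (0 : ℝ) ∈ lowerBounds (A t) := by
    rintro t _ ⟨h, _, rfl⟩
    positivity
  have hbb : ∀ t : ℝ, BddBelow (A t) := fun t => ⟨0, hlb t⟩
  have hne : ∀ t : ℝ, 0 ≤ t → (A t).Nonempty := by
    intro t ht
    exact ⟨_, 0, by simpa using ht, rfl⟩
  have hInn : ∀ t : ℝ, 0 ≤ t → 0 ≤ I t := by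
    intro t ht
    rw [hI]
    exact le_csInf (hne t ht) (fun c hc => hlb t hc)
  have hIle : ∀ (t : ℝ) (h : H), ‖h‖ ≤ t →
      I t ≤ (⨆ x, |(⟪h, Φ x⟫ : ℝ) - g x|) ^ 2 := by
    intro t h hh
    rw [hI]
    exact csInf_le (hbb t) ⟨h, hh, rfl⟩
  set d := Real.sqrt K * (s - r) with hd
  have hdnn : 0 ≤ d := mul_nonneg (Real.sqrt_nonneg _) (sub_nonneg.mpr hrs)
  -- key estimate
  have key : ∀ h : H, ‖h‖ ≤ s →
      Real.sqrt (I r) ≤ (⨆ x, |(⟪h, Φ x⟫ : ℝ) - g x|) + d := by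
    intro h hh
    rcases eq_or_lt_of_le (hr.trans hrs) with hs0 | hs0
    · -- s = 0, hence r = 0 and h = 0
      have hs0 : s = 0 := hs0.symm
      have hr0 : r = 0 := le_antisymm (hrs.trans_eq hs0) hr
      have hIr : I r ≤ (⨆ x, |(⟪h, Φ x⟫ : ℝ) - g x|) ^ 2 :=
        hIle r h (by rw [hr0]; simpa [hs0] using hh)
      calc Real.sqrt (I r) ≤ Real.sqrt ((⨆ x, |(⟪h, Φ x⟫ : ℝ) - g x|) ^ 2) :=
            Real.sqrt_le_sqrt hIr
        _ = ⨆ x, |(⟪h, Φ x⟫ : ℝ) - g x| := Real.sqrt_sq (hSnn h)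
        _ ≤ _ := le_add_of_nonneg_right hdnn
    · -- s > 0
      set h' : H := (r / s) • h with hh'
      have hrs' : r / s ≤ 1 := div_le_one_of_le₀ hrs hs0.le
      have hrsnn : 0 ≤ r / s := div_nonneg hr hs0.le
      have hnorm' : ‖h'‖ ≤ r := by
        rw [hh', norm_smul, Real.norm_eq_abs, abs_of_nonneg hrsnn]
        calc r / s * ‖h‖ ≤ r / s * s := by gcongr
          _ = r := div_mul_cancel₀ r hs0.ne'
      have hdiff : ‖h - h'‖ ≤ s - r := by
        have : h - h' = (1 - r / s) • h := by
          rw [hh', sub_smul, one_smul]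
        rw [this, norm_smul, Real.norm_eq_abs, abs_of_nonneg (by linarith)]
        calc (1 - r / s) * ‖h‖ ≤ (1 - r / s) * s := by gcongr
          _ = s - r := by field_simp
      have hpt : ∀ x : S, |(⟪h', Φ x⟫ : ℝ) - g x| ≤
          (⨆ x, |(⟪h, Φ x⟫ : ℝ) - g x|) + d := by
        intro x
        have h1 : (⟪h', Φ x⟫ : ℝ) - g x = ((⟪h, Φ x⟫ : ℝ) - g x) - ⟪h - h', Φ x⟫ := by
          rw [inner_sub_left]; ring
        calc |(⟪h', Φ x⟫ : ℝ) - g x|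
            ≤ |(⟪h, Φ x⟫ : ℝ) - g x| + |(⟪h - h', Φ x⟫ : ℝ)| := by
              rw [h1]; exact abs_sub _ _
          _ ≤ (⨆ x, |(⟪h, Φ x⟫ : ℝ) - g x|) + ‖h - h'‖ * ‖Φ x‖ :=
              add_le_add (le_ciSup (hbddS h) x) (abs_real_inner_le_norm _ _)
          _ ≤ (⨆ x, |(⟪h, Φ x⟫ : ℝ) - g x|) + (s - r) * Real.sqrt K :=
              add_le_add_right
                (mul_le_mul hdiff (hΦK x) (norm_nonneg _) (sub_nonneg.mpr hrs)) _
          _ = (⨆ x, |(⟪h, Φ x⟫ : ℝ) - g x|) + d := by rw [hd]; ring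
      have hsup' : (⨆ x, |(⟪h', Φ x⟫ : ℝ) - g x|) ≤
          (⨆ x, |(⟪h, Φ x⟫ : ℝ) - g x|) + d :=
        Real.iSup_le hpt (add_nonneg (hSnn h) hdnn)
      calc Real.sqrt (I r) ≤ Real.sqrt ((⨆ x, |(⟪h', Φ x⟫ : ℝ) - g x|) ^ 2) :=
            Real.sqrt_le_sqrt (hIle r h' hnorm')
        _ = ⨆ x, |(⟪h', Φ x⟫ : ℝ) - g x| := Real.sqrt_sq (hSnn h')
        _ ≤ _ := hsup'
  constructor
  · rw [hI, hI]
    refine csInf_le_csInf (hbb s) (hne r hr) ?_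
    rintro c ⟨h, hh, rfl⟩
    exact ⟨h, hh.trans hrs, rfl⟩
  · have hmain : Real.sqrt (I r) ≤ Real.sqrt (I s) + d := by
      by_cases hcase : Real.sqrt (I r) ≤ d
      · exact hcase.trans (le_add_of_nonneg_left (Real.sqrt_nonneg _))
      · push_neg at hcase
        set t := Real.sqrt (I r) - d with ht
        have htnn : 0 ≤ t := by simp [ht]; linarith
        have hts : t ^ 2 ≤ I s := by
          rw [hI]
          refine le_csInf (hne s (hr.trans hrs)) ?_
          rintro c ⟨h, hh, rfl⟩
          have := key h hh
          have ht' : t ≤ ⨆ x, |(⟪h, Φ x⟫ : ℝ) - g x| := by rw [ht]; linarith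
          exact pow_le_pow_left₀ htnn ht' 2
        have : t ≤ Real.sqrt (I s) := by
          calc t = Real.sqrt (t ^ 2) := (Real.sqrt_sq htnn).symm
            _ ≤ Real.sqrt (I s) := Real.sqrt_le_sqrt hts
        rw [ht] at this; linarith
    calc I r = Real.sqrt (I r) ^ 2 := (Real.sq_sqrt (hInn r hr)).symm
      _ ≤ (Real.sqrt (I s) + d) ^ 2 :=
        pow_le_pow_left₀ (Real.sqrt_nonneg _) hmain 2
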